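/- Let s ≥ 2 be an integer, h ≠ 0 a real number, and c_2, …, c_s pairwise distinct nonzero reals. Then the (s−1)×(s−1) real matrix Q with entries Q_{i,j} = −(1/s)·(c_{i+1} h)^{j+1} / j! (for i, j = 1, …, s−1) is invertible. -/

import Mathlib

open Matrix

/-- Let `s ≥ 2`, `h ≠ 0`, and let `c_2, …, c_s` (here `c : Fin (s-1) → ℝ`) be pairwise
distinct nonzero reals. Then the `(s-1) × (s-1)` matrix `Q` with entries
`Q_{i,j} = -(1/s) (c_{i+1} h)^{j+1} / j!` (for `i, j = 1, …, s-1`) is invertible. -/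
theorem Q_matrix_invertible (s : ℕ) (hs : 2 ≤ s) (h : ℝ) (hh : h ≠ 0)
    (c : Fin (s - 1) → ℝ) (hc : Function.Injective c) (hc0 : ∀ i, c i ≠ 0)
    (Q : Matrix (Fin (s - 1)) (Fin (s - 1)) ℝ)
    (hQ : ∀ i j, Q i j =
      -(1 / (s : ℝ)) * (c i * h) ^ ((j : ℕ) + 2) / ((((j : ℕ) + 1).factorial : ℝ))) :
    IsUnit Q := by
  have hfac : Q = Matrix.diagonal (fun i => -(1 / (s : ℝ)) * (c i * h) ^ 2) *
      Matrix.vandermonde (fun i => c i * h) *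
      Matrix.diagonal (fun j : Fin (s - 1) => ((((j : ℕ) + 1).factorial : ℝ))⁻¹) := by
    ext i j
    simp [Matrix.mul_apply, Matrix.diagonal, Matrix.vandermonde, Finset.mul_sum,
      Finset.sum_mul, hQ i j]
    rw [show (j : ℕ) + 2 = 2 + (j : ℕ) by ring, pow_add]
    ring
  rw [Matrix.isUnit_iff_isUnit_det, isUnit_iff_ne_zero, hfac]
  rw [Matrix.det_mul, Matrix.det_mul, Matrix.det_diagonal, Matrix.det_diagonal,
    Matrix.det_vandermonde]
  have hs0 : (s : ℝ) ≠ 0 := by positivity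
  apply mul_ne_zero
  apply mul_ne_zero
  · apply Finset.prod_ne_zero_iff.2
    intro i _
    have := hc0 i
    intro hcontra
    simp [mul_eq_zero] at hcontra
    rcases hcontra with h1 | h2
    · exact hs0 (by exact_mod_cast h1)
    · rcases h2 with h2 | h2 <;> simp_all
  · apply Finset.prod_ne_zero_iff.2
    intro i _
    apply Finset.prod_ne_zero_iff.2
    intro j hj
    simp only [Finset.mem_Ioi] at hj
    have : c j ≠ c i := fun e => (ne_of_lt hj) (hc e).symm
    intro hcontra
    apply this
    have := sub_eq_zero.mp hcontra
    field_simp at this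
    linarith
  · apply Finset.prod_ne_zero_iff.2
    intro j _
    exact inv_ne_zero (by exact_mod_cast Nat.factorial_ne_zero _)
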